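/- Let G = (V,E) be a graph with |V| = p and let σ be any ordering of V. Then the triangulated graph D^σ(G) = (V, D^σ(E)) satisfies: (i) E ⊆ D^σ(E); (ii) σ is a perfect elimination ordering of D^σ(G); and (iii) D^σ(G) is decomposable. In particular, D^σ(G) is a decomposable cover of G. -/

import Mathlib

open SimpleGraph

variable {V : Type*}

/-- One step of the elimination/triangulation process: at step `k` (0-based) the vertex with
label `k` is eliminated, and all pairs of its neighbours with larger labels are joined. -/
def triStep {n : ℕ} (σ : V ≃ Fin n) (H : SimpleGraph V) (k : ℕ) : SimpleGraph V where
  Adj u v := H.Adj u v ∨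
    (u ≠ v ∧ ∃ hk : k < n, k < (σ u : ℕ) ∧ k < (σ v : ℕ) ∧
      H.Adj u (σ.symm ⟨k, hk⟩) ∧ H.Adj v (σ.symm ⟨k, hk⟩))
  symm := ⟨by
    rintro u v (h | ⟨hne, hk, h1, h2, h3, h4⟩)
    · exact Or.inl h.symm
    · exact Or.inr ⟨hne.symm, hk, h2, h1, h4, h3⟩⟩
  loopless := ⟨by
    rintro u (h | ⟨hne, _⟩)
    · exact h.ne rfl
    · exact hne rfl⟩

/-- The sequence of graphs `E_0, E_1, …` in the triangulation process. -/
def triSeq {n : ℕ} (σ : V ≃ Fin n) (G : SimpleGraph V) : ℕ → SimpleGraph V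
  | 0 => G
  | k + 1 => triStep σ (triSeq σ G k) k

/-- The triangulation `D^σ(G)` of `G` under the ordering `σ` (`p − 2` elimination steps). -/
def triangulation {n : ℕ} (σ : V ≃ Fin n) (G : SimpleGraph V) : SimpleGraph V :=
  triSeq σ G (n - 2)

/-- `σ` is a perfect elimination ordering of `G`: for every `j`, the vertex `σ⁻¹(j)` together
with its higher-labelled neighbours forms a clique. -/
def IsPerfectElimOrdering {n : ℕ} (σ : V ≃ Fin n) (G : SimpleGraph V) : Prop :=
  ∀ j : Fin n,
    G.IsClique ({σ.symm j} ∪ {v : V | (j : ℕ) < (σ v : ℕ) ∧ G.Adj v (σ.symm j)})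

/-- A graph is decomposable (chordal) if it has no induced cycle of length `≥ 4`. -/
def IsDecomposable (G : SimpleGraph V) : Prop :=
  ∀ n : ℕ, 4 ≤ n → IsEmpty (SimpleGraph.cycleGraph n ↪g G)

/-- `σ` is a Generalized Bartlett ordering of `G`: no triangle of `D^σ(G)` consists of three
non-edges of `G`. -/
def IsGBOrdering {n : ℕ} (σ : V ≃ Fin n) (G : SimpleGraph V) : Prop :=
  ¬ ∃ u v w : V,
      ¬ G.Adj u v ∧ ¬ G.Adj v w ∧ ¬ G.Adj u w ∧
      (triangulation σ G).Adj u v ∧ (triangulation σ G).Adj v w ∧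
      (triangulation σ G).Adj u w

/-- `G` is a Generalized Bartlett graph: it admits a Generalized Bartlett ordering. -/
def IsGB (G : SimpleGraph V) : Prop :=
  ∃ (n : ℕ) (σ : V ≃ Fin n), IsGBOrdering σ G

lemma triSeq_mono {n : ℕ} (σ : V ≃ Fin n) (G : SimpleGraph V) :
    Monotone (triSeq σ G) := by
  apply monotone_nat_of_le_succ
  intro k u v h
  exact Or.inl h

lemma triSeq_stab {n : ℕ} (σ : V ≃ Fin n) (G : SimpleGraph V) (j : ℕ) :
    ∀ (d : ℕ) {u v : V}, (triSeq σ G (j + d)).Adj u v →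
      ((σ u : ℕ) ≤ j ∨ (σ v : ℕ) ≤ j) → (triSeq σ G j).Adj u v := by
  intro d
  induction d with
  | zero => exact fun h _ => h
  | succ d ih =>
    intro u v h hle
    rcases h with h | ⟨hne, hk, h1, h2, _, _⟩
    · exact ih h hle
    · simp only [Nat.add_eq] at h1 h2
      omega

lemma triangulation_adj_key {n : ℕ} (σ : V ≃ Fin n) (G : SimpleGraph V) (j : Fin n)
    {u v : V} (huv : u ≠ v) (hu1 : (j : ℕ) < (σ u : ℕ)) (hv1 : (j : ℕ) < (σ v : ℕ))
    (hu2 : (triangulation σ G).Adj u (σ.symm j))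
    (hv2 : (triangulation σ G).Adj v (σ.symm j)) :
    (triangulation σ G).Adj u v := by
  have hn : (j : ℕ) < n := j.isLt
  have hσu : (σ u : ℕ) < n := (σ u).isLt
  have hσv : (σ v : ℕ) < n := (σ v).isLt
  have hne : (σ u : ℕ) ≠ (σ v : ℕ) := fun h => huv (σ.injective (Fin.ext h))
  have hj2 : (j : ℕ) + 1 ≤ n - 2 := by omega
  have hd : (j : ℕ) + (n - 2 - (j : ℕ)) = n - 2 := by omega
  have hw : (σ (σ.symm j) : ℕ) = (j : ℕ) := by simp
  have hu3 : (triSeq σ G (j : ℕ)).Adj u (σ.symm j) :=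
    triSeq_stab σ G (j : ℕ) (n - 2 - (j : ℕ)) (by rw [hd]; exact hu2) (Or.inr (by simp))
  have hv3 : (triSeq σ G (j : ℕ)).Adj v (σ.symm j) :=
    triSeq_stab σ G (j : ℕ) (n - 2 - (j : ℕ)) (by rw [hd]; exact hv2) (Or.inr (by simp))
  have hstep : (triSeq σ G ((j : ℕ) + 1)).Adj u v := by
    refine Or.inr ⟨huv, hn, hu1, hv1, ?_, ?_⟩
    · have : (⟨(j : ℕ), hn⟩ : Fin n) = j := by ext; rfl
      rw [this]; exact hu3
    · have : (⟨(j : ℕ), hn⟩ : Fin n) = j := by ext; rfl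
      rw [this]; exact hv3
  exact triSeq_mono σ G hj2 hstep

lemma triangulation_peo {n : ℕ} (σ : V ≃ Fin n) (G : SimpleGraph V) :
    IsPerfectElimOrdering σ (triangulation σ G) := by
  intro j u hu v hv huv
  simp only [Set.mem_union, Set.mem_singleton_iff, Set.mem_setOf_eq] at hu hv
  rcases hu with rfl | ⟨hu1, hu2⟩
  · rcases hv with rfl | ⟨hv1, hv2⟩
    · exact absurd rfl huv
    · exact hv2.symm
  · rcases hv with rfl | ⟨hv1, hv2⟩
    · exact hu2
    · exact triangulation_adj_key σ G j huv hu1 hv1 hu2 hv2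

open Fin.CommRing in
lemma fin_val_two (k : ℕ) : ((2 : Fin (k + 2 + 2)) : ℕ) = 2 := by
  have h : (2 : Fin (k + 2 + 2)) = ((2 : ℕ) : Fin (k + 2 + 2)) := by norm_cast
  rw [h, Fin.val_natCast]
  exact Nat.mod_eq_of_lt (by omega)

open Fin.CommRing in
lemma fin_val_three (k : ℕ) : ((3 : Fin (k + 2 + 2)) : ℕ) = 3 % (k + 2 + 2) := by
  have h : (3 : Fin (k + 2 + 2)) = ((3 : ℕ) : Fin (k + 2 + 2)) := by norm_cast
  rw [h, Fin.val_natCast]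

open Fin.CommRing in
lemma isDecomposable_of_peo {n : ℕ} (σ : V ≃ Fin n) (H : SimpleGraph V)
    (hpeo : IsPerfectElimOrdering σ H) : IsDecomposable H := by
  intro m hm
  constructor
  intro e
  obtain ⟨k, rfl⟩ : ∃ k, m = k + 2 + 2 := ⟨m - 4, by omega⟩
  obtain ⟨i0, -, hmin⟩ := Finset.exists_min_image Finset.univ
    (fun i : Fin (k + 2 + 2) => (σ (e i) : ℕ)) ⟨0, Finset.mem_univ _⟩
  set a : Fin (k + 2 + 2) := i0 + 1 with ha
  set b : Fin (k + 2 + 2) := i0 - 1 with hb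
  have hab : a ≠ b := by
    intro h
    have h2 : (2 : Fin (k + 2 + 2)) = 0 := by
      rw [ha, hb] at h; linear_combination h
    rw [Fin.ext_iff, fin_val_two, Fin.val_zero] at h2
    omega
  have hai : a ≠ i0 := by
    intro h
    have h2 : (1 : Fin (k + 2 + 2)) = 0 := by
      rw [ha] at h; linear_combination h
    rw [Fin.ext_iff, Fin.val_one, Fin.val_zero] at h2
    omega
  have hbi : b ≠ i0 := by
    intro h
    have h2 : (1 : Fin (k + 2 + 2)) = 0 := by
      rw [hb] at h; linear_combination -h
    rw [Fin.ext_iff, Fin.val_one, Fin.val_zero] at h2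
    omega
  have hadj_a : (cycleGraph (k + 2 + 2)).Adj a i0 := by
    rw [cycleGraph_adj]
    left
    rw [ha, add_sub_cancel_left]
  have hadj_b : (cycleGraph (k + 2 + 2)).Adj b i0 := by
    rw [cycleGraph_adj]
    right
    rw [hb, sub_sub_cancel]
  have hnadj : ¬ (cycleGraph (k + 2 + 2)).Adj a b := by
    rw [cycleGraph_adj, ha, hb]
    push_neg
    constructor
    · have h : i0 + 1 - (i0 - 1) = 2 := by ring
      rw [h, ne_eq, Fin.ext_iff, fin_val_two, Fin.val_one]
      omega
    · have h : i0 - 1 - (i0 + 1) = -2 := by ring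
      rw [h]
      intro h2
      have h3 : (3 : Fin (k + 2 + 2)) = 0 := by linear_combination -h2
      rw [Fin.ext_iff, fin_val_three, Fin.val_zero] at h3
      have := Nat.mod_eq_of_lt (show 3 < k + 2 + 2 by omega)
      omega
  have h1 : H.Adj (e a) (e i0) := e.map_adj_iff.mpr hadj_a
  have h2 : H.Adj (e b) (e i0) := e.map_adj_iff.mpr hadj_b
  have hlta : (σ (e i0) : ℕ) < (σ (e a) : ℕ) :=
    lt_of_le_of_ne (hmin a (Finset.mem_univ _))
      (fun h => hai (e.injective (σ.injective (Fin.ext h))).symm)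
  have hltb : (σ (e i0) : ℕ) < (σ (e b) : ℕ) :=
    lt_of_le_of_ne (hmin b (Finset.mem_univ _))
      (fun h => hbi (e.injective (σ.injective (Fin.ext h))).symm)
  set j := σ (e i0) with hj
  have hsymm : σ.symm j = e i0 := σ.symm_apply_apply _
  have hA : e a ∈ ({σ.symm j} ∪ {v : V | (j : ℕ) < (σ v : ℕ) ∧ H.Adj v (σ.symm j)} : Set V) :=
    Or.inr ⟨hlta, by rw [hsymm]; exact h1⟩
  have hB : e b ∈ ({σ.symm j} ∪ {v : V | (j : ℕ) < (σ v : ℕ) ∧ H.Adj v (σ.symm j)} : Set V) :=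
    Or.inr ⟨hltb, by rw [hsymm]; exact h2⟩
  have hneab : e a ≠ e b := fun h => hab (e.injective h)
  exact hnadj (e.map_adj_iff.mp (hpeo j hA hB hneab))

/-- the triangulation `D^σ(G)` contains `G`, has `σ` as a perfect elimination
ordering, and is decomposable; in particular it is a decomposable cover of `G`. -/
theorem triangulation_isDecomposableCover [Fintype V] (G : SimpleGraph V)
    (σ : V ≃ Fin (Fintype.card V)) :
    G ≤ triangulation σ G ∧
      IsPerfectElimOrdering σ (triangulation σ G) ∧
      IsDecomposable (triangulation σ G) := by
  refine ⟨?_, triangulation_peo σ G, isDecomposable_of_peo σ _ (triangulation_peo σ G)⟩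
  have : triSeq σ G 0 = G := rfl
  calc G = triSeq σ G 0 := rfl
    _ ≤ triSeq σ G (Fintype.card V - 2) := triSeq_mono σ G (Nat.zero_le _)
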